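/- Barwise–Moschovakis theorem: let τ be a relational first-order language, L = τ ∪ {X} its expansion by one new unary relation symbol X, and φ(X,x) an L-formula positive in X with one free first-order variable. The following are equivalent: (1) φ is bounded, i.e., there is n < ω such that φ^{n+1}(A) = φ^n(A) for every τ-structure A; (2) the least fixed point is uniformly first-order definable: there is a τ-formula ψ(x) such that φ^∞(A) = { a ∈ A | A ⊨ ψ(a) } for every τ-structure A; (3) for every τ-structure A there is a τ-formula ψ_A(x) such that φ^∞(A) = { a ∈ A | A ⊨ ψ_A(a) }. -/

import Mathlib

open FirstOrder Language

universe u v w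

/-- The language with a single unary relation symbol `X` (and nothing else). -/
def XLang : FirstOrder.Language where
  Functions := fun _ => Empty
  Relations := fun n =>
    match n with
    | 1 => PUnit
    | _ => Empty

/-- The expansion `τ ∪ {X}` of a language `τ` by one new unary relation symbol `X`. -/
abbrev Lx (τ : FirstOrder.Language.{u, v}) : FirstOrder.Language := τ.sum XLang

/-- The `XLang`-structure on `A` interpreting the unary symbol `X` as the set `P`. -/
def xStructure {A : Type w} (P : Set A) : XLang.Structure A where
  funMap := fun f _ => f.elim
  RelMap := fun {n} =>
    match n with
    | 0 => fun R _ => R.elim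
    | 1 => fun _ x => x 0 ∈ P
    | _ + 2 => fun R _ => R.elim

/-- The `(τ ∪ {X})`-structure `(A, P)` expanding the `τ`-structure `A` by interpreting `X` as
`P`. -/
def withX (τ : FirstOrder.Language.{u, v}) {A : Type w} [τ.Structure A] (P : Set A) :
    (Lx τ).Structure A :=
  @Language.sumStructure τ XLang A _ (xStructure P)

/-- The relation symbols of `τ ∪ {X}` that come from the new part, i.e. the symbol `X`. -/
def IsXSymbol {τ : FirstOrder.Language.{u, v}} {n : ℕ} : (Lx τ).Relations n → Prop
  | Sum.inl _ => False
  | Sum.inr _ => True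

/-- `PolarityOK true φ` says every occurrence of `X` in `φ` is under an even number of
negations (i.e. `φ` is positive in `X`); `PolarityOK false φ` says that every occurrence is
under an odd number (i.e. `φ` is negative in `X`). -/
def PolarityOK {τ : FirstOrder.Language.{u, v}} :
    ∀ {α : Type w} {n : ℕ}, Bool → (Lx τ).BoundedFormula α n → Prop
  | _, _, _, .falsum => True
  | _, _, _, .equal _ _ => True
  | _, _, b, .rel R _ => IsXSymbol R → b = true
  | _, _, b, .imp φ ψ => PolarityOK (!b) φ ∧ PolarityOK b ψ
  | _, _, b, .all φ => PolarityOK b φ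

/-- `φ` is positive in the unary relation symbol `X`. -/
def PositiveInX {τ : FirstOrder.Language.{u, v}} {α : Type w} {n : ℕ}
    (φ : (Lx τ).BoundedFormula α n) : Prop :=
  PolarityOK true φ

/-- The operator `F_{φ,A} : P ↦ { a | (A,P) ⊨ φ(a) }` induced by a formula `φ(X,x)` with one
free first-order variable on a `τ`-structure `A`. -/
def stepOp (τ : FirstOrder.Language.{u, v}) {A : Type w} [τ.Structure A]
    (φ : (Lx τ).Formula (Fin 1)) (P : Set A) : Set A :=
  letI := withX τ P
  { a : A | φ.Realize ![a] }

/-- The least (pre-)fixed point of an operator on sets; for a monotone operator this is the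
Knaster–Tarski least fixed point. -/
def lfpSet {A : Type w} (F : Set A → Set A) : Set A :=
  sInf { P | F P ⊆ P }

section Aux

variable {τ : FirstOrder.Language.{u, v}} [τ.IsRelational]

instance : XLang.IsRelational := fun _ => ⟨fun x => x.elim⟩

/-- extract the variable of a term in a relational language -/
def tvar {α : Type*} : (Lx τ).Term α → α
  | .var v => v
  | .func f _ => isEmptyElim f

theorem tvar_spec {α : Type*} (t : (Lx τ).Term α) : t = .var (tvar t) := by
  cases t with
  | var v => rfl
  | func f _ => exact isEmptyElim f

theorem tvar_realize {α : Type*} {A : Type w} [(Lx τ).Structure A] (t : (Lx τ).Term α)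
    (v : α → A) : t.realize v = v (tvar t) := by
  conv_lhs => rw [tvar_spec t]
  rfl

/-- Substitute the `τ`-formula `ψ` for the unary relation symbol `X` in an `Lx τ`-formula. -/
def substX (ψ : τ.Formula (Fin 1)) :
    ∀ {α : Type w} {n : ℕ}, (Lx τ).BoundedFormula α n → τ.BoundedFormula α n
  | _, _, .falsum => .falsum
  | _, _, .equal t₁ t₂ => .equal (.var (tvar t₁)) (.var (tvar t₂))
  | _, _, .rel (Sum.inl R) ts => .rel R fun i => .var (tvar (ts i))
  | _, _, @BoundedFormula.rel _ _ _ 1 (Sum.inr _) ts =>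
      BoundedFormula.relabel (fun _ : Fin 1 => tvar (ts 0)) ψ
  | _, _, @BoundedFormula.rel _ _ _ 0 (Sum.inr R) _ => nomatch R
  | _, _, @BoundedFormula.rel _ _ _ (_ + 2) (Sum.inr R) _ => nomatch R
  | _, _, .imp f g => (substX ψ f).imp (substX ψ g)
  | _, _, .all f => (substX ψ f).all

theorem bf_realize_of_formula {A : Type w} [τ.Structure A] {γ : Type*} (ψ : τ.Formula γ)
    (w : γ → A) (y : Fin 0 → A) : BoundedFormula.Realize ψ w y ↔ ψ.Realize w := by
  unfold Formula.Realize
  exact iff_of_eq (congrArg _ (Subsingleton.elim _ _))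

universe x

theorem realize_substX {A : Type w} [τ.Structure A] {ψ : τ.Formula (Fin 1)} {P : Set A}
    (hP : ∀ a : A, a ∈ P ↔ ψ.Realize ![a]) {α : Type x} {n : ℕ}
    (f : (Lx τ).BoundedFormula α n) :
    ∀ (v : α → A) (xs : Fin n → A),
      (@BoundedFormula.Realize _ A (withX τ P) α n f v xs ↔ (substX ψ f).Realize v xs) := by
  induction f with
  | falsum => intro v xs; simp only [substX]; exact Iff.rfl
  | equal t₁ t₂ =>
      intro v xs
      simp only [substX]
      letI := withX τ P
      show t₁.realize (Sum.elim v xs) = t₂.realize (Sum.elim v xs) ↔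
        Term.realize (Sum.elim v xs) (.var (tvar t₁)) = Term.realize (Sum.elim v xs)
          (.var (tvar t₂))
      rw [tvar_realize, tvar_realize, Term.realize_var, Term.realize_var]
  | rel R ts =>
      intro v xs
      rcases R with R | R
      · simp only [substX]
        letI := withX τ P
        show Structure.RelMap (L := Lx τ) (M := A) (Sum.inl R)
            (fun i => (ts i).realize (Sum.elim v xs)) ↔
          Structure.RelMap (L := τ) (M := A) R
            (fun i => Term.realize (Sum.elim v xs) (.var (tvar (ts i))))
        have h1 : (fun i => (ts i).realize (Sum.elim v xs)) =
            (fun i => Term.realize (L := τ) (M := A) (Sum.elim v xs) (.var (tvar (ts i)))) := by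
          funext i
          rw [tvar_realize, Term.realize_var]
        rw [h1]
        rfl
      · rename_i l
        match l, R, ts with
        | 0, R, ts => exact (nomatch R)
        | l + 2, R, ts => exact (nomatch R)
        | 1, R, ts =>
          letI := withX τ P
          show (ts 0).realize (Sum.elim v xs) ∈ P ↔
            (substX ψ (.rel (Sum.inr R) ts)).Realize v xs
          simp only [substX]
          rw [tvar_realize, hP (Sum.elim v xs (tvar (ts 0))), BoundedFormula.realize_relabel,
            bf_realize_of_formula]
          have h1 : (Sum.elim v (xs ∘ Fin.castAdd 0) ∘ (fun _ : Fin 1 => tvar (ts 0))) =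
              ![Sum.elim v xs (tvar (ts 0))] := by
            funext i
            fin_cases i
            cases tvar (ts 0) <;> rfl
          rw [h1]
  | imp f g ihf ihg =>
      intro v xs
      simp only [substX, BoundedFormula.realize_imp]
      rw [ihf v xs, ihg v xs]
  | all f ihf =>
      intro v xs
      simp only [substX, BoundedFormula.realize_all]
      exact forall_congr' fun a => ihf v (Fin.snoc xs a)

end Aux

section Aux2

variable {τ : FirstOrder.Language.{u, v}} [τ.IsRelational] {A : Type w} [τ.Structure A]

universe x

theorem realize_polarity {P Q : Set A} (hPQ : P ⊆ Q) {α : Type x} {n : ℕ}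
    (f : (Lx τ).BoundedFormula α n) :
    ∀ (b : Bool), PolarityOK b f → ∀ (v : α → A) (xs : Fin n → A),
      (b = true → (@BoundedFormula.Realize _ A (withX τ P) α n f v xs →
        @BoundedFormula.Realize _ A (withX τ Q) α n f v xs)) ∧
      (b = false → (@BoundedFormula.Realize _ A (withX τ Q) α n f v xs →
        @BoundedFormula.Realize _ A (withX τ P) α n f v xs)) := by
  induction f with
  | falsum => exact fun b _ v xs => ⟨fun _ h => h, fun _ h => h⟩
  | equal t₁ t₂ =>
      intro b _ v xs
      have key : ∀ (S : Set A), @BoundedFormula.Realize _ A (withX τ S) _ _ (.equal t₁ t₂) v xs ↔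
          Sum.elim v xs (tvar t₁) = Sum.elim v xs (tvar t₂) := by
        intro S
        letI := withX τ S
        show t₁.realize (Sum.elim v xs) = t₂.realize (Sum.elim v xs) ↔ _
        rw [tvar_realize, tvar_realize]
      rw [key P, key Q]
      exact ⟨fun _ h => h, fun _ h => h⟩
  | rel R ts =>
      intro b hpol v xs
      simp only [PolarityOK] at hpol
      rcases R with R | R
      · have key : ∀ (S : Set A),
            @BoundedFormula.Realize _ A (withX τ S) _ _ (.rel (Sum.inl R) ts) v xs ↔
            Structure.RelMap (L := τ) (M := A) R (fun i => Sum.elim v xs (tvar (ts i))) := by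
          intro S
          letI := withX τ S
          show Structure.RelMap (L := Lx τ) (M := A) (Sum.inl R)
              (fun i => (ts i).realize (Sum.elim v xs)) ↔ _
          have h1 : (fun i => Term.realize (M := A) (Sum.elim v xs) (ts i)) =
              fun i => Sum.elim v xs (tvar (ts i)) := funext fun i => tvar_realize _ _
          rw [h1]
          rfl
        rw [key P, key Q]
        exact ⟨fun _ h => h, fun _ h => h⟩
      · rename_i l
        match l, R, ts with
        | 0, R, ts => exact (nomatch R)
        | l + 2, R, ts => exact (nomatch R)
        | 1, R, ts =>
          have hb : b = true := hpol (by simp [IsXSymbol])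
          subst hb
          have key : ∀ (S : Set A),
              @BoundedFormula.Realize _ A (withX τ S) _ _ (.rel (Sum.inr R) ts) v xs ↔
              Sum.elim v xs (tvar (ts 0)) ∈ S := by
            intro S
            letI := withX τ S
            show (ts 0).realize (Sum.elim v xs) ∈ S ↔ _
            rw [tvar_realize]
          rw [key P, key Q]
          exact ⟨fun _ h => hPQ h, fun h => absurd h (by simp)⟩
  | imp f g ihf ihg =>
      intro b hpol v xs
      simp only [PolarityOK] at hpol
      obtain ⟨hpf, hpg⟩ := hpol
      have Hf := ihf (!b) hpf v xs
      have Hg := ihg b hpg v xs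
      cases b with
      | true =>
          refine ⟨fun _ h hq => ?_, fun h => absurd h (by simp)⟩
          exact (Hg.1 rfl) (h ((Hf.2 rfl) hq))
      | false =>
          refine ⟨fun h => absurd h (by simp), fun _ h hp => ?_⟩
          exact (Hg.2 rfl) (h ((Hf.1 rfl) hp))
  | all f ihf =>
      intro b hpol v xs
      simp only [PolarityOK] at hpol
      cases b with
      | true =>
          refine ⟨fun _ h a => ?_, fun h => absurd h (by simp)⟩
          exact ((ihf true hpol v (Fin.snoc xs a)).1 rfl) (h a)
      | false =>
          refine ⟨fun h => absurd h (by simp), fun _ h a => ?_⟩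
          exact ((ihf false hpol v (Fin.snoc xs a)).2 rfl) (h a)

theorem realize_mono {P Q : Set A} (hPQ : P ⊆ Q) {α : Type x} {n : ℕ}
    {f : (Lx τ).BoundedFormula α n} (hf : PositiveInX f) {v : α → A} {xs : Fin n → A}
    (h : @BoundedFormula.Realize _ A (withX τ P) α n f v xs) :
    @BoundedFormula.Realize _ A (withX τ Q) α n f v xs :=
  ((realize_polarity hPQ f true hf v xs).1 rfl) h

theorem mem_stepOp_iff {φ : (Lx τ).Formula (Fin 1)} {P : Set A} {a : A} :
    a ∈ stepOp τ φ P ↔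
      @BoundedFormula.Realize _ A (withX τ P) (Fin 1) 0 φ ![a] default :=
  Iff.rfl

theorem stepOp_mono {φ : (Lx τ).Formula (Fin 1)} (hφ : PositiveInX φ) {P Q : Set A}
    (hPQ : P ⊆ Q) : stepOp τ φ P ⊆ stepOp τ φ Q := fun _ ha =>
  mem_stepOp_iff.mpr (realize_mono hPQ hφ (mem_stepOp_iff.mp ha))

end Aux2

section Aux3

variable {τ : FirstOrder.Language.{u, v}} [τ.IsRelational]

/-- The `τ`-formula defining the `n`-th stage of the induction. -/
def stageF (φ : (Lx τ).Formula (Fin 1)) : ℕ → τ.Formula (Fin 1)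
  | 0 => BoundedFormula.falsum
  | n + 1 => substX (stageF φ n) φ

variable {A : Type w} [τ.Structure A] {φ : (Lx τ).Formula (Fin 1)}

theorem stage_eq (hφ : PositiveInX φ) :
    ∀ n : ℕ, (stepOp τ φ (A := A))^[n] ∅ = { a : A | (stageF φ n).Realize ![a] } := by
  intro n
  induction n with
  | zero =>
      ext a
      simp only [Function.iterate_zero, id_eq, Set.mem_empty_iff_false, Set.mem_setOf_eq]
      exact ⟨False.elim, fun h => h⟩
  | succ n ih =>
      rw [Function.iterate_succ_apply']
      ext a
      rw [mem_stepOp_iff (A := A)]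
      have hP : ∀ b : A, b ∈ (stepOp τ φ (A := A))^[n] ∅ ↔ (stageF φ n).Realize ![b] := by
        intro b
        rw [ih]
        rfl
      rw [realize_substX hP φ ![a] default]
      rfl

theorem stage_mono (hφ : PositiveInX φ) :
    ∀ n : ℕ, (stepOp τ φ (A := A))^[n] ∅ ⊆ (stepOp τ φ (A := A))^[n + 1] ∅ := by
  intro n
  induction n with
  | zero => simp
  | succ n ih =>
      rw [Function.iterate_succ_apply', Function.iterate_succ_apply' _ (n + 1)]
      exact stepOp_mono hφ ih

theorem stage_mono_le (hφ : PositiveInX φ) {m n : ℕ} (h : m ≤ n) :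
    (stepOp τ φ (A := A))^[m] ∅ ⊆ (stepOp τ φ (A := A))^[n] ∅ := by
  induction n with
  | zero => rw [Nat.le_zero.mp h]
  | succ n ih =>
      rcases Nat.lt_or_ge m (n + 1) with h' | h'
      · exact (ih (Nat.lt_succ_iff.mp h')).trans (stage_mono hφ n)
      · rw [Nat.le_antisymm h h']

theorem stage_stab (hφ : PositiveInX φ) {n : ℕ}
    (h : (stepOp τ φ (A := A))^[n + 1] ∅ = (stepOp τ φ (A := A))^[n] ∅) {m : ℕ} (hm : n ≤ m) :
    (stepOp τ φ (A := A))^[m] ∅ = (stepOp τ φ (A := A))^[n] ∅ := by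
  induction m with
  | zero => rw [Nat.le_zero.mp hm]
  | succ m ih =>
      rcases Nat.lt_or_ge m n with h' | h'
      · rw [Nat.le_antisymm hm h']
      · rw [Function.iterate_succ_apply', ih h',
          ← Function.iterate_succ_apply' (stepOp τ φ) n ∅]
        exact h

theorem prefix_lfpSet {F : Set A → Set A} (hF : ∀ {P Q : Set A}, P ⊆ Q → F P ⊆ F Q) :
    F (lfpSet F) ⊆ lfpSet F := by
  intro a ha
  rw [lfpSet, Set.sInf_eq_sInter, Set.mem_sInter]
  rintro P hP
  exact hP (hF (sInf_le hP) ha)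

theorem lfpSet_subset {F : Set A → Set A} {P : Set A} (h : F P ⊆ P) : lfpSet F ⊆ P :=
  sInf_le h

theorem iterate_subset_prefixed {F : Set A → Set A} (hF : ∀ {P Q : Set A}, P ⊆ Q → F P ⊆ F Q)
    {P : Set A} (h : F P ⊆ P) : ∀ n : ℕ, F^[n] ∅ ⊆ P := by
  intro n
  induction n with
  | zero => simp
  | succ n ih =>
      rw [Function.iterate_succ_apply']
      exact (hF ih).trans h

theorem stage_subset_lfpSet (hφ : PositiveInX φ) (n : ℕ) :
    (stepOp τ φ (A := A))^[n] ∅ ⊆ lfpSet (stepOp τ φ (A := A)) :=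
  iterate_subset_prefixed (fun h => stepOp_mono hφ h)
    (prefix_lfpSet (fun h => stepOp_mono hφ h)) n

theorem lfpSet_eq_stage (hφ : PositiveInX φ) {n : ℕ}
    (h : (stepOp τ φ (A := A))^[n + 1] ∅ = (stepOp τ φ (A := A))^[n] ∅) :
    lfpSet (stepOp τ φ (A := A)) = (stepOp τ φ (A := A))^[n] ∅ := by
  apply Set.Subset.antisymm
  · apply lfpSet_subset
    rw [← Function.iterate_succ_apply' (stepOp τ φ) n ∅, h]
  · exact stage_subset_lfpSet hφ n

end Aux3

section Aux3b

variable {τ : FirstOrder.Language.{u, v}} [τ.IsRelational]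
variable {A : Type w} [τ.Structure A] {φ : (Lx τ).Formula (Fin 1)}

theorem realize_stage_iff (hφ : PositiveInX φ) {n : ℕ} {a : A} :
    a ∈ (stepOp τ φ (A := A))^[n] ∅ ↔ (stageF φ n).Realize ![a] := by
  rw [stage_eq hφ]
  rfl

theorem realize_substX_stage (hφ : PositiveInX φ) {α : Type x} {k : ℕ}
    (f : (Lx τ).BoundedFormula α k) (n : ℕ) (v : α → A) (xs : Fin k → A) :
    @BoundedFormula.Realize _ A (withX τ ((stepOp τ φ (A := A))^[n] ∅)) α k f v xs ↔
      (substX (stageF φ n) f).Realize v xs :=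
  realize_substX (fun _ => realize_stage_iff hφ) f v xs

theorem realize_stage_mono_le (hφ : PositiveInX φ) {m n : ℕ} (hmn : m ≤ n) {a : A}
    (h : (stageF φ m).Realize ![a]) : (stageF φ n).Realize ![a] :=
  (realize_stage_iff hφ).mp (stage_mono_le hφ hmn ((realize_stage_iff hφ).mpr h))

end Aux3b

section Ultra

open Filter

variable {τ : FirstOrder.Language.{u, v}} [τ.IsRelational]
variable {Aseq : ℕ → Type w} [∀ i, τ.Structure (Aseq i)] [∀ i, Nonempty (Aseq i)]

/-- pointwise evaluation of a snoc of functions -/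
theorem snoc_pt {k : ℕ} (xsf : Fin k → ∀ i, Aseq i) (c : ∀ i, Aseq i) (i : ℕ) :
    (fun j => Fin.snoc (α := fun _ => ∀ i, Aseq i) xsf c j i) = Fin.snoc (fun j => xsf j i) (c i) := by
  funext j
  refine Fin.lastCases ?_ ?_ j
  · simp
  · intro j'
    simp

/-- Realization of chains of types in a countably-incomplete ultraproduct. -/
theorem ultra_chain {α : Type x} {k : ℕ} (θ : ℕ → τ.BoundedFormula α (k + 1))
    (hdec : ∀ (C : Type w) [τ.Structure C] (n m : ℕ), n ≤ m → ∀ (w : α → C)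
      (ys : Fin (k + 1) → C), (θ m).Realize w ys → (θ n).Realize w ys)
    (v : α → ((hyperfilter ℕ : Filter ℕ).Product Aseq))
    (xs : Fin k → ((hyperfilter ℕ : Filter ℕ).Product Aseq))
    (hsat : ∀ n : ℕ, ∃ c, (θ n).Realize v (Fin.snoc xs c)) :
    ∃ c, ∀ n : ℕ, (θ n).Realize v (Fin.snoc xs c) := by
  classical
  have hvf : ∀ a : α, ∃ g : ∀ i, Aseq i, (g : (hyperfilter ℕ : Filter ℕ).Product Aseq) = v a :=
    fun a => Quotient.exists_rep (v a)
  choose vf hvf using hvf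
  have hxsf : ∀ j : Fin k, ∃ g : ∀ i, Aseq i,
      (g : (hyperfilter ℕ : Filter ℕ).Product Aseq) = xs j :=
    fun j => Quotient.exists_rep (xs j)
  choose xsf hxsf using hxsf
  -- the satisfiability sets
  set T : ℕ → Set ℕ := fun n =>
    { i : ℕ | ∃ c : Aseq i, (θ n).Realize (fun a => vf a i) (Fin.snoc (fun j => xsf j i) c) }
    with hT
  have hTmem : ∀ n, T n ∈ hyperfilter ℕ := by
    intro n
    obtain ⟨c, hc⟩ := hsat n
    obtain ⟨cf, hcf⟩ := Quotient.exists_rep c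
    have hreal : (θ n).Realize (fun a : α => ((vf a : (hyperfilter ℕ : Filter ℕ).Product Aseq)))
        (fun j => (Fin.snoc (α := fun _ => ∀ i, Aseq i) xsf cf j :
          (hyperfilter ℕ : Filter ℕ).Product Aseq)) := by
      have h1 : (fun a : α => ((vf a : (hyperfilter ℕ : Filter ℕ).Product Aseq))) = v := by
        funext a; exact hvf a
      have h2 : (fun j => (Fin.snoc (α := fun _ => ∀ i, Aseq i) xsf cf j :
          (hyperfilter ℕ : Filter ℕ).Product Aseq)) = Fin.snoc xs c := by
        funext j
        refine Fin.lastCases ?_ ?_ j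
        · simp only [Fin.snoc_last]
          exact hcf.trans (Fin.snoc_last (α := fun _ => (hyperfilter ℕ : Filter ℕ).Product Aseq) (p := xs) (x := c)).symm
        · intro j'
          simp only [Fin.snoc_castSucc]
          exact (hxsf j').trans (Fin.snoc_castSucc (α := fun _ => (hyperfilter ℕ : Filter ℕ).Product Aseq) (p := xs) (x := c) (i := j')).symm
      rw [h1, h2]
      exact hc
    rw [Ultraproduct.boundedFormula_realize_cast] at hreal
    refine mem_of_superset hreal ?_
    intro i hi
    refine ⟨cf i, ?_⟩
    rw [← snoc_pt xsf cf i]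
    exact hi
  -- choose componentwise witnesses at the largest feasible level
  have hchoice : ∀ i : ℕ, ∃ c : Aseq i, ∀ n : ℕ, n ≤ i → i ∈ T n →
      (θ n).Realize (fun a => vf a i) (Fin.snoc (fun j => xsf j i) c) := by
    intro i
    by_cases h : ∃ n, n ≤ i ∧ i ∈ T n
    · set N := Nat.findGreatest (fun n => i ∈ T n) i with hN
      obtain ⟨n₀, hn₀i, hn₀T⟩ := h
      have hNT : i ∈ T N := Nat.findGreatest_spec (P := fun n => i ∈ T n) hn₀i hn₀T
      obtain ⟨c, hc⟩ := hNT
      refine ⟨c, fun n hni hiT => ?_⟩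
      have hnN : n ≤ N := Nat.le_findGreatest hni hiT
      exact hdec (Aseq i) n N hnN _ _ hc
    · refine ⟨Classical.arbitrary _, fun n hni hiT => absurd ⟨n, hni, hiT⟩ h⟩
  choose cf hcf using hchoice
  refine ⟨(cf : (hyperfilter ℕ : Filter ℕ).Product Aseq), fun n => ?_⟩
  have h1 : (fun a : α => ((vf a : (hyperfilter ℕ : Filter ℕ).Product Aseq))) = v := by
    funext a; exact hvf a
  have h2 : (fun j => (Fin.snoc (α := fun _ => ∀ i, Aseq i) xsf cf j :
      (hyperfilter ℕ : Filter ℕ).Product Aseq)) =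
      Fin.snoc xs ((cf : (hyperfilter ℕ : Filter ℕ).Product Aseq)) := by
    funext j
    refine Fin.lastCases ?_ ?_ j
    · simp only [Fin.snoc_last]
      exact (Fin.snoc_last (α := fun _ => (hyperfilter ℕ : Filter ℕ).Product Aseq) (p := xs) (x := (cf : (hyperfilter ℕ : Filter ℕ).Product Aseq))).symm
    · intro j'
      simp only [Fin.snoc_castSucc]
      exact (hxsf j').trans (Fin.snoc_castSucc (α := fun _ => (hyperfilter ℕ : Filter ℕ).Product Aseq) (p := xs) (x := (cf : (hyperfilter ℕ : Filter ℕ).Product Aseq)) (i := j')).symm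
  suffices hs : (θ n).Realize (fun a : α => ((vf a : (hyperfilter ℕ : Filter ℕ).Product Aseq)))
      (fun j => (Fin.snoc (α := fun _ => ∀ i, Aseq i) xsf cf j :
        (hyperfilter ℕ : Filter ℕ).Product Aseq)) by
    rw [h1, h2] at hs; exact hs
  rw [Ultraproduct.boundedFormula_realize_cast]
  have hcof : {i : ℕ | n ≤ i} ∈ hyperfilter ℕ := by
    apply mem_hyperfilter_of_finite_compl
    have : {i : ℕ | n ≤ i}ᶜ ⊆ Set.Iio n := by
      intro i hi
      simpa using hi
    exact (Set.finite_Iio n).subset this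
  filter_upwards [hTmem n, hcof] with i hiT hni
  rw [snoc_pt xsf cf i]
  exact hcf i n hni hiT

end Ultra

section Ultra2

open Filter

variable {τ : FirstOrder.Language.{u, v}} [τ.IsRelational]
variable {Aseq : ℕ → Type w} [∀ i, τ.Structure (Aseq i)] [∀ i, Nonempty (Aseq i)]
variable {φ : (Lx τ).Formula (Fin 1)}


theorem ultra_continuity (hφ : PositiveInX φ) {α : Type x} {k : ℕ}
    (f : (Lx τ).BoundedFormula α k) :
    ∀ (b : Bool), PolarityOK b f → ∀ (v : α → ((hyperfilter ℕ : Filter ℕ).Product Aseq)) (xs : Fin k → ((hyperfilter ℕ : Filter ℕ).Product Aseq)),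
      (b = true → @BoundedFormula.Realize _ _ (withX τ (⋃ m, (stepOp τ φ (A := (hyperfilter ℕ : Filter ℕ).Product Aseq))^[m] ∅)) α k f v xs →
        ∃ n, @BoundedFormula.Realize _ _ (withX τ ((stepOp τ φ (A := (hyperfilter ℕ : Filter ℕ).Product Aseq))^[n] ∅)) α k f v xs) ∧
      (b = false → (∀ n, @BoundedFormula.Realize _ _ (withX τ ((stepOp τ φ (A := (hyperfilter ℕ : Filter ℕ).Product Aseq))^[n] ∅)) α k f v xs) →
        @BoundedFormula.Realize _ _ (withX τ (⋃ m, (stepOp τ φ (A := (hyperfilter ℕ : Filter ℕ).Product Aseq))^[m] ∅)) α k f v xs) := by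
  induction f with
  | falsum =>
      intro b _ v xs
      exact ⟨fun _ h => absurd h id, fun _ h => (h 0).elim⟩
  | equal t₁ t₂ =>
      intro b _ v xs
      have key : ∀ (S : Set ((hyperfilter ℕ : Filter ℕ).Product Aseq)), @BoundedFormula.Realize _ _ (withX τ S) _ _ (.equal t₁ t₂) v xs ↔
          Sum.elim v xs (tvar t₁) = Sum.elim v xs (tvar t₂) := by
        intro S
        letI := withX τ S
        show t₁.realize (Sum.elim v xs) = t₂.realize (Sum.elim v xs) ↔ _
        rw [tvar_realize, tvar_realize]
      constructor
      · intro _ h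
        exact ⟨0, (key _).mpr ((key _).mp h)⟩
      · intro _ h
        exact (key _).mpr ((key _).mp (h 0))
  | rel R ts =>
      intro b hpol v xs
      simp only [PolarityOK] at hpol
      rcases R with R | R
      · have key : ∀ (S : Set ((hyperfilter ℕ : Filter ℕ).Product Aseq)),
            @BoundedFormula.Realize _ _ (withX τ S) _ _ (.rel (Sum.inl R) ts) v xs ↔
            Structure.RelMap (L := τ) (M := ((hyperfilter ℕ : Filter ℕ).Product Aseq)) R (fun i => Sum.elim v xs (tvar (ts i))) := by
          intro S
          letI := withX τ S
          show Structure.RelMap (L := Lx τ) (M := ((hyperfilter ℕ : Filter ℕ).Product Aseq)) (Sum.inl R)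
              (fun i => (ts i).realize (Sum.elim v xs)) ↔ _
          have h1 : (fun i => Term.realize (M := ((hyperfilter ℕ : Filter ℕ).Product Aseq)) (Sum.elim v xs) (ts i)) =
              fun i => Sum.elim v xs (tvar (ts i)) := funext fun i => tvar_realize _ _
          rw [h1]
          rfl
        constructor
        · intro _ h
          exact ⟨0, (key _).mpr ((key _).mp h)⟩
        · intro _ h
          exact (key _).mpr ((key _).mp (h 0))
      · rename_i l
        match l, R, ts with
        | 0, R, ts => exact (nomatch R)
        | l + 2, R, ts => exact (nomatch R)
        | 1, R, ts =>
          have hb : b = true := hpol (by simp [IsXSymbol])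
          subst hb
          have key : ∀ (S : Set ((hyperfilter ℕ : Filter ℕ).Product Aseq)),
              @BoundedFormula.Realize _ _ (withX τ S) _ _ (.rel (Sum.inr R) ts) v xs ↔
              Sum.elim v xs (tvar (ts 0)) ∈ S := by
            intro S
            letI := withX τ S
            show (ts 0).realize (Sum.elim v xs) ∈ S ↔ _
            rw [tvar_realize]
          refine ⟨fun _ h => ?_, fun h => absurd h (by simp)⟩
          have := (key _).mp h
          rw [Set.mem_iUnion] at this
          obtain ⟨n, hn⟩ := this
          exact ⟨n, (key _).mpr hn⟩
  | imp f g ihf ihg =>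
      intro b hpol v xs
      simp only [PolarityOK] at hpol
      obtain ⟨hpf, hpg⟩ := hpol
      cases b with
      | true =>
          refine ⟨fun _ H => ?_, fun h => absurd h (by simp)⟩
          by_cases hc : ∀ n, @BoundedFormula.Realize _ _ (withX τ ((stepOp τ φ (A := (hyperfilter ℕ : Filter ℕ).Product Aseq))^[n] ∅)) _ _ f v xs
          · have hfω := (ihf false hpf v xs).2 rfl hc
            obtain ⟨n, hgn⟩ := (ihg true hpg v xs).1 rfl (H hfω)
            exact ⟨n, fun _ => hgn⟩
          · push_neg at hc
            obtain ⟨n, hn⟩ := hc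
            exact ⟨n, fun hf' => absurd hf' hn⟩
      | false =>
          refine ⟨fun h => absurd h (by simp), fun _ H => ?_⟩
          intro hfω
          obtain ⟨n₀, hfn₀⟩ := (ihf true hpf v xs).1 rfl hfω
          have hgall : ∀ m, @BoundedFormula.Realize _ _ (withX τ ((stepOp τ φ (A := (hyperfilter ℕ : Filter ℕ).Product Aseq))^[m] ∅)) _ _ g v xs := by
            intro m
            have hfN : @BoundedFormula.Realize _ _ (withX τ ((stepOp τ φ (A := (hyperfilter ℕ : Filter ℕ).Product Aseq))^[max n₀ m] ∅)) _ _ f v xs :=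
              realize_mono (stage_mono_le hφ (le_max_left n₀ m)) hpf hfn₀
            have hgN := H (max n₀ m) hfN
            exact ((realize_polarity (stage_mono_le hφ (le_max_right n₀ m)) g false hpg
              v xs).2 rfl) hgN
          exact (ihg false hpg v xs).2 rfl hgall
  | @all k' f' ih =>
      intro b hpol v xs
      simp only [PolarityOK] at hpol
      cases b with
      | true =>
          refine ⟨fun _ hω => ?_, fun h => absurd h (by simp)⟩
          by_contra hcon
          push_neg at hcon
          have hex : ∀ n, ∃ c : ((hyperfilter ℕ : Filter ℕ).Product Aseq),
              ¬ @BoundedFormula.Realize _ _ (withX τ ((stepOp τ φ (A := (hyperfilter ℕ : Filter ℕ).Product Aseq))^[n] ∅)) _ _ f' v (Fin.snoc xs c) := by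
            intro n
            by_contra h'
            push_neg at h'
            exact hcon n (fun c => h' c)
          have hchain := ultra_chain (Aseq := Aseq)
            (fun n => (substX (stageF φ n) f').not)
            (fun C _ n m hnm w ys hm => by
              rw [BoundedFormula.realize_not] at hm ⊢
              intro hn
              exact hm ((realize_substX_stage hφ f' m w ys).mp
                (realize_mono (stage_mono_le hφ hnm) hpol
                  ((realize_substX_stage hφ f' n w ys).mpr hn))))
            v xs
            (fun n => by
              obtain ⟨c, hc⟩ := hex n
              refine ⟨c, ?_⟩
              rw [BoundedFormula.realize_not]
              intro h'
              exact hc ((realize_substX_stage hφ f' n v (Fin.snoc xs c)).mpr h'))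
          obtain ⟨c, hc⟩ := hchain
          obtain ⟨n, hn⟩ := (ih true hpol v (Fin.snoc xs c)).1 rfl (hω c)
          have := hc n
          rw [BoundedFormula.realize_not] at this
          exact this ((realize_substX_stage hφ f' n v (Fin.snoc xs c)).mp hn)
      | false =>
          refine ⟨fun h => absurd h (by simp), fun _ H c => ?_⟩
          exact (ih false hpol v (Fin.snoc xs c)).2 rfl (fun n => H n c)

end Ultra2

section Ultra3

open Filter

variable {τ : FirstOrder.Language.{u, v}} [τ.IsRelational]
variable {Aseq : ℕ → Type w} [∀ i, τ.Structure (Aseq i)] [∀ i, Nonempty (Aseq i)]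
variable {φ : (Lx τ).Formula (Fin 1)}

theorem ultra_omega_prefixed (hφ : PositiveInX φ) :
    stepOp τ φ (A := (hyperfilter ℕ : Filter ℕ).Product Aseq)
        (⋃ m, (stepOp τ φ (A := (hyperfilter ℕ : Filter ℕ).Product Aseq))^[m] ∅) ⊆
      ⋃ m, (stepOp τ φ (A := (hyperfilter ℕ : Filter ℕ).Product Aseq))^[m] ∅ := by
  intro a ha
  obtain ⟨n, hn⟩ := (ultra_continuity (Aseq := Aseq) hφ φ true hφ ![a] default).1 rfl
    (mem_stepOp_iff.mp ha)
  refine Set.mem_iUnion.mpr ⟨n + 1, ?_⟩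
  rw [Function.iterate_succ_apply']
  exact mem_stepOp_iff.mpr hn

/-- Łoś's theorem for formulas in one variable. -/
theorem los_formula (ψ : τ.Formula (Fin 1)) (g : ∀ i, Aseq i) :
    ψ.Realize (M := (hyperfilter ℕ : Filter ℕ).Product Aseq)
        ![(g : (hyperfilter ℕ : Filter ℕ).Product Aseq)] ↔
      ∀ᶠ i in (hyperfilter ℕ : Filter ℕ), ψ.Realize ![g i] := by
  unfold Formula.Realize
  have h1 : (![(g : (hyperfilter ℕ : Filter ℕ).Product Aseq)] : Fin 1 → _) =
      (fun j : Fin 1 => (((fun _ : Fin 1 => g) j : ∀ i, Aseq i) :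
        (hyperfilter ℕ : Filter ℕ).Product Aseq)) := by
    funext j
    fin_cases j
    rfl
  have h2 : (default : Fin 0 → (hyperfilter ℕ : Filter ℕ).Product Aseq) =
      (fun j : Fin 0 => (((fun j' : Fin 0 => j'.elim0 (α := ∀ i, Aseq i)) j : ∀ i, Aseq i) :
        (hyperfilter ℕ : Filter ℕ).Product Aseq)) := Subsingleton.elim _ _
  refine (iff_of_eq (congrArg₂ (BoundedFormula.Realize ψ) h1 h2)).trans ?_
  refine (Ultraproduct.boundedFormula_realize_cast _ _ _).trans ?_
  apply eventually_congr
  filter_upwards with i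
  have h3 : (fun j : Fin 1 => (fun _ : Fin 1 => g) j i) = ![g i] := by
    funext j
    fin_cases j
    rfl
  rw [h3]
  exact iff_of_eq (congrArg _ (Subsingleton.elim _ _))

theorem realize_relabel1 {C : Type w} [τ.Structure C] (χ : τ.Formula (Fin 1)) (v : Empty → C)
    (ys : Fin 1 → C) :
    (BoundedFormula.relabel (fun _ : Fin 1 => (Sum.inr 0 : Empty ⊕ Fin 1)) χ).Realize v ys ↔
      χ.Realize ![ys 0] := by
  rw [BoundedFormula.realize_relabel]
  unfold Formula.Realize
  have h1 : (Sum.elim v (ys ∘ Fin.castAdd 0) ∘ (fun _ : Fin 1 => (Sum.inr 0 : Empty ⊕ Fin 1))) =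
      ![ys 0] := by
    funext j
    fin_cases j
    rfl
  rw [h1]
  exact iff_of_eq (congrArg _ (Subsingleton.elim _ _))

end Ultra3


/-- **The Barwise–Moschovakis theorem.** For a relational language `τ` and an `X`-positive
`(τ ∪ {X})`-formula `φ(X,x)` with one free first-order variable, the following are equivalent:
(1) `φ` is bounded, i.e. some finite stage `φ^n` is the fixed point on every `τ`-structure;
(2) the least fixed point `φ^∞` is uniformly definable by a single `τ`-formula `ψ(x)`;
(3) on every `τ`-structure `A` the least fixed point is definable by some `τ`-formula. -/
theorem barwise_moschovakis {τ : FirstOrder.Language.{u, v}} [τ.IsRelational]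
    (φ : (Lx τ).Formula (Fin 1)) (hφ : PositiveInX φ) :
    List.TFAE
      [ ∃ n : ℕ, ∀ (A : Type w) [τ.Structure A],
          (stepOp τ φ (A := A))^[n + 1] ∅ = (stepOp τ φ (A := A))^[n] ∅,
        ∃ ψ : τ.Formula (Fin 1), ∀ (A : Type w) [τ.Structure A],
          lfpSet (stepOp τ φ (A := A)) = { a : A | ψ.Realize ![a] },
        ∀ (A : Type w) [τ.Structure A], ∃ ψ : τ.Formula (Fin 1),
          lfpSet (stepOp τ φ (A := A)) = { a : A | ψ.Realize ![a] } ] := by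
  tfae_have 1 → 2
  · rintro ⟨n, hn⟩
    refine ⟨stageF φ n, fun A _ => ?_⟩
    rw [lfpSet_eq_stage hφ (hn A), stage_eq hφ]
  tfae_have 2 → 3
  · rintro ⟨ψ, h⟩ A _
    exact ⟨ψ, h A⟩
  tfae_have 3 → 1
  · intro h3
    by_contra hall
    -- extract counterexample structures at every level
    have h4 : ∀ n : ℕ, ∃ (A : Type w) (_ : τ.Structure A),
        (stepOp τ φ (A := A))^[n + 1] ∅ ≠ (stepOp τ φ (A := A))^[n] ∅ := by
      intro n
      by_contra hc
      push_neg at hc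
      exact hall ⟨n, fun A inst => hc A inst⟩
    choose Aseq inst hneq using h4
    letI : ∀ i, τ.Structure (Aseq i) := inst
    haveI : ∀ i, Nonempty (Aseq i) := by
      intro i
      obtain ⟨a, -, -⟩ := Set.exists_of_ssubset
        ((stage_mono (A := Aseq i) hφ i).ssubset_of_ne (Ne.symm (hneq i)))
      exact ⟨a⟩
    -- all finite stages are distinct in `Aseq i` up to level `i`
    have hdist : ∀ i n : ℕ, n ≤ i →
        (stepOp τ φ (A := Aseq i))^[n + 1] ∅ ≠ (stepOp τ φ (A := Aseq i))^[n] ∅ := by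
      intro i n hni heq
      apply hneq i
      rw [stage_stab (m := i + 1) hφ heq (le_trans hni (Nat.le_succ i)),
        stage_stab (m := i) hφ heq hni]
    -- all finite stages are distinct in the ultraproduct
    have bdist : ∀ n : ℕ, ∃ b : (Filter.hyperfilter ℕ : Filter ℕ).Product Aseq,
        (stageF φ (n + 1)).Realize ![b] ∧ ¬ (stageF φ n).Realize ![b] := by
      intro n
      have hwit : ∀ i : ℕ, ∃ a : Aseq i, n ≤ i →
          ((stageF φ (n + 1)).Realize ![a] ∧ ¬ (stageF φ n).Realize ![a]) := by
        intro i
        by_cases h : n ≤ i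
        · obtain ⟨a, ha1, ha2⟩ := Set.exists_of_ssubset
            ((stage_mono (A := Aseq i) hφ n).ssubset_of_ne (Ne.symm (hdist i n h)))
          exact ⟨a, fun _ => ⟨(realize_stage_iff hφ).mp ha1,
            fun hr => ha2 ((realize_stage_iff hφ).mpr hr)⟩⟩
        · exact ⟨Classical.arbitrary _, fun h' => absurd h' h⟩
      choose g hg using hwit
      have hcof : {i : ℕ | n ≤ i} ∈ Filter.hyperfilter ℕ := by
        apply Filter.mem_hyperfilter_of_finite_compl
        have : {i : ℕ | n ≤ i}ᶜ ⊆ Set.Iio n := fun i hi => by simpa using hi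
        exact (Set.finite_Iio n).subset this
      refine ⟨(g : (Filter.hyperfilter ℕ : Filter ℕ).Product Aseq), ?_, ?_⟩
      · rw [los_formula]
        filter_upwards [hcof] with i hi
        exact (hg i hi).1
      · intro hreal
        rw [los_formula] at hreal
        obtain ⟨i, hi1, hi2⟩ := (hreal.and (Filter.eventually_iff.mpr hcof)).exists
        exact (hg i hi2).2 hi1
    -- the definable least fixed point in the ultraproduct
    obtain ⟨ψB, hψB⟩ := h3 ((Filter.hyperfilter ℕ : Filter ℕ).Product Aseq)
    -- realize the chain type ⟨ψB, ¬stage n⟩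
    have hchain := ultra_chain (Aseq := Aseq) (k := 0)
      (fun n => BoundedFormula.relabel (fun _ : Fin 1 => (Sum.inr 0 : Empty ⊕ Fin 1))
        (ψB ⊓ (stageF φ n).not))
      (fun C _ n m hnm w ys hm => by
        rw [realize_relabel1] at hm ⊢
        rw [Formula.realize_inf] at hm ⊢
        refine ⟨hm.1, ?_⟩
        rw [Formula.realize_not] at hm ⊢
        exact fun hr => hm.2 (realize_stage_mono_le hφ hnm hr))
      (fun e => e.elim) (fun j => j.elim0)
      (fun n => by
        obtain ⟨b, hb1, hb2⟩ := bdist n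
        refine ⟨b, ?_⟩
        rw [realize_relabel1]
        have hsnoc : (Fin.snoc (α := fun _ => (Filter.hyperfilter ℕ : Filter ℕ).Product Aseq)
            (fun j => j.elim0) b) 0 = b := by
          simp [Fin.snoc]
        rw [hsnoc, Formula.realize_inf, Formula.realize_not]
        refine ⟨?_, hb2⟩
        have hmem : b ∈ lfpSet (stepOp τ φ
            (A := (Filter.hyperfilter ℕ : Filter ℕ).Product Aseq)) :=
          stage_subset_lfpSet hφ (n + 1) ((realize_stage_iff hφ).mpr hb1)
        rw [hψB] at hmem
        exact hmem)
    obtain ⟨c, hc⟩ := hchain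
    have hsnoc : (Fin.snoc (α := fun _ => (Filter.hyperfilter ℕ : Filter ℕ).Product Aseq)
        (fun j => j.elim0) c) 0 = c := by
      simp [Fin.snoc]
    have hcprops : ψB.Realize ![c] ∧ ∀ n : ℕ, ¬ (stageF φ n).Realize ![c] := by
      constructor
      · have := hc 0
        rw [realize_relabel1, hsnoc, Formula.realize_inf] at this
        exact this.1
      · intro n
        have := hc n
        rw [realize_relabel1, hsnoc, Formula.realize_inf, Formula.realize_not] at this
        exact this.2
    -- yet c is in the least fixed point, which is contained in the ω-th stage
    have hclfp : c ∈ lfpSet (stepOp τ φ (A := (Filter.hyperfilter ℕ : Filter ℕ).Product Aseq)) := by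
      rw [hψB]
      exact hcprops.1
    have hcom := lfpSet_subset (ultra_omega_prefixed (Aseq := Aseq) hφ) hclfp
    obtain ⟨m, hm⟩ := Set.mem_iUnion.mp hcom
    exact hcprops.2 m ((realize_stage_iff hφ).mp hm)
  tfae_finish
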